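/- Let q be a probability distribution on [n], let m > 0 be a real number, and let X_i be a random variable distributed as Poi(m·q_i). Set Z_i = (X_i − m/n)² − X_i and Δ_i = 1/n − q_i. Then E[Z_i] = m²·Δ_i². Consequently, if X_1,…,X_n are independent with X_i ~ Poi(m·q_i) and Z = Σ_{i=1}^n Z_i, then E[Z] = m²·‖q − U_n‖₂². -/

import Mathlib

open Finset ProbabilityTheory MeasureTheory

/-- The probability mass that a function on `Fin n` assigns to the (0-indexed)
interval `[a, b)`. -/
noncomputable def intervalMass {n : ℕ} (q : Fin n → ℝ) (a b : ℕ) : ℝ :=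
  ∑ j ∈ Finset.univ.filter (fun j : Fin n => a ≤ (j : ℕ) ∧ (j : ℕ) < b), q j

/-- `q` is a probability distribution on `[n]` (identified with `Fin n`). -/
noncomputable def IsDist {n : ℕ} (q : Fin n → ℝ) : Prop := (∀ i, 0 ≤ q i) ∧ ∑ i, q i = 1

/-- The `A_k` distance between `p` and `q` on `Fin n`: the supremum, over all partitions of
`Fin n` into `k` consecutive intervals (described by their monotone sequence of boundary
points), of the sum of the discrepancies `|p(I) - q(I)|` over the intervals. -/
noncomputable def AkDist (n k : ℕ) (p q : Fin n → ℝ) : ℝ :=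
  sSup { x : ℝ | ∃ b : Fin (k + 1) → ℕ, Monotone b ∧ b 0 = 0 ∧ b (Fin.last k) = n ∧
    x = ∑ i : Fin k,
      |intervalMass p (b i.castSucc) (b i.succ) - intervalMass q (b i.castSucc) (b i.succ)| }

/-- The `L1` distance between two functions on `Fin n`. -/
noncomputable def L1Dist {n : ℕ} (p q : Fin n → ℝ) : ℝ := ∑ i, |p i - q i|

/-- The `L2` distance between two functions on `Fin n`. -/
noncomputable def L2Dist {n : ℕ} (p q : Fin n → ℝ) : ℝ := Real.sqrt (∑ i, (p i - q i) ^ 2)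

/-- The uniform distribution on `Fin n`. -/
noncomputable def unif (n : ℕ) : Fin n → ℝ := fun _ => 1 / n

/-- The probability that the `m`-fold product measure `q^{⊗m}` assigns to a set
`A ⊆ [n]^m` of sample sequences. -/
noncomputable def prodProb {n m : ℕ} (q : Fin n → ℝ) (A : Finset (Fin m → Fin n)) : ℝ :=
  ∑ x ∈ A, ∏ j, q (x j)

/-- The reduced distribution of `q` w.r.t. the partition of `Fin n` into `ℓ` consecutive
intervals of equal length `n / ℓ` (assuming `ℓ ∣ n`). -/
noncomputable def reducedDist {n : ℕ} (q : Fin n → ℝ) (ℓ : ℕ) : Fin ℓ → ℝ :=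
  fun i => intervalMass q ((i : ℕ) * (n / ℓ)) (((i : ℕ) + 1) * (n / ℓ))

/-- `p` is a `t`-piecewise degree-`d` function on `Fin n`: there is a partition of `Fin n`
into `t` consecutive intervals on each of which `p` agrees with a real polynomial of degree
at most `d`. -/
noncomputable def IsPiecewisePoly {n : ℕ} (t d : ℕ) (p : Fin n → ℝ) : Prop :=
  ∃ b : Fin (t + 1) → ℕ, Monotone b ∧ b 0 = 0 ∧ b (Fin.last t) = n ∧
    ∀ i : Fin t, ∃ P : Polynomial ℝ, P.degree ≤ (d : ℕ) ∧
      ∀ x : Fin n, b i.castSucc ≤ (x : ℕ) → (x : ℕ) < b i.succ → p x = P.eval ((x : ℕ) : ℝ)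

/-- `q` is `k`-flat: there is a partition of `Fin n` into `k` consecutive intervals
on each of which `q` is constant. -/
noncomputable def IsKFlat {n : ℕ} (k : ℕ) (q : Fin n → ℝ) : Prop :=
  ∃ b : Fin (k + 1) → ℕ, Monotone b ∧ b 0 = 0 ∧ b (Fin.last k) = n ∧
    ∀ i : Fin k, ∃ c : ℝ, ∀ x : Fin n, b i.castSucc ≤ (x : ℕ) → (x : ℕ) < b i.succ → q x = c

/-- The term `Discr(I)² / width(I)^{1/8}` for the interval `I = [a, b)` in `Fin n`, where
the discrepancy is `Discr(I) = |q(I) - U_n(I)|` and the width is `|I|/n` (relative to the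
uniform distribution `U_n`). -/
noncomputable def ssTerm {n : ℕ} (q : Fin n → ℝ) (a b : ℕ) : ℝ :=
  |intervalMass q a b - ((b - a : ℕ) : ℝ) / n| ^ 2 / (((b - a : ℕ) : ℝ) / n) ^ ((1 : ℝ) / 8)

/-- The squared scale-sensitive-`L2` distance between `q` and the uniform distribution
on `Fin n`, at scale `1/k`: the supremum, over all partitions of `Fin n` into consecutive
nonempty intervals each of width at most `1/k`, of `∑ Discr(I)² / width(I)^{1/8}`. -/
noncomputable def ssDistSq (n k : ℕ) (q : Fin n → ℝ) : ℝ :=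
  sSup { x : ℝ | ∃ r : ℕ, ∃ b : Fin (r + 1) → ℕ, StrictMono b ∧ b 0 = 0 ∧ b (Fin.last r) = n ∧
    (∀ i : Fin r, ((b i.succ - b i.castSucc : ℕ) : ℝ) / n ≤ 1 / k) ∧
    x = ∑ i : Fin r, ssTerm q (b i.castSucc) (b i.succ) }

open Real NNReal


lemma pois_shift1 (r : ℝ≥0) (n : ℕ) :
    poissonPMFReal r (n + 1) * (n + 1) = (r : ℝ) * poissonPMFReal r n := by
  simp only [poissonPMFReal, Nat.factorial_succ, pow_succ]
  push_cast
  have : ((n : ℝ) + 1) ≠ 0 := by positivity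
  field_simp

lemma pois_sum1 (r : ℝ≥0) : HasSum (fun n : ℕ => poissonPMFReal r n * n) r := by
  have h := (show HasSum (fun n => poissonPMFReal r n) 1 from poissonPMFRealSum r)
  refine (hasSum_nat_add_iff' (f := fun n : ℕ => poissonPMFReal r n * n) 1).mp ?_
  have h2 : HasSum (fun n : ℕ => poissonPMFReal r (n + 1) * ((n + 1 : ℕ) : ℝ)) ((r : ℝ)) := by
    have e : (fun n : ℕ => poissonPMFReal r (n + 1) * ((n + 1 : ℕ) : ℝ)) =
        fun n : ℕ => (r : ℝ) * poissonPMFReal r n := by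
      funext n; push_cast; exact pois_shift1 r n
    rw [e]; simpa using h.mul_left (r : ℝ)
  convert h2 using 1
  · rfl
  simp

lemma pois_shift2 (r : ℝ≥0) (n : ℕ) :
    poissonPMFReal r (n + 2) * (((n + 2 : ℕ) : ℝ) * (((n + 2 : ℕ) : ℝ) - 1)) =
      (r : ℝ) ^ 2 * poissonPMFReal r n := by
  show poissonPMFReal r (n + 1 + 1) * _ = _
  simp only [poissonPMFReal, Nat.factorial_succ, pow_succ]
  push_cast
  have h1 : ((n : ℝ) + 1) ≠ 0 := by positivity
  have h2 : ((n : ℝ) + 1 + 1) ≠ 0 := by positivity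
  field_simp
  ring

lemma pois_sum2 (r : ℝ≥0) :
    HasSum (fun n : ℕ => poissonPMFReal r n * ((n : ℝ) * ((n : ℝ) - 1))) ((r : ℝ) ^ 2) := by
  have h := (show HasSum (fun n => poissonPMFReal r n) 1 from poissonPMFRealSum r)
  refine (hasSum_nat_add_iff'
    (f := fun n : ℕ => poissonPMFReal r n * ((n : ℝ) * ((n : ℝ) - 1))) 2).mp ?_
  have h2 : HasSum (fun n : ℕ => poissonPMFReal r (n + 2) *
      (((n + 2 : ℕ) : ℝ) * (((n + 2 : ℕ) : ℝ) - 1))) ((r : ℝ) ^ 2) := by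
    have e : (fun n : ℕ => poissonPMFReal r (n + 2) *
        (((n + 2 : ℕ) : ℝ) * (((n + 2 : ℕ) : ℝ) - 1))) =
        fun n : ℕ => (r : ℝ) ^ 2 * poissonPMFReal r n := by
      funext n; exact pois_shift2 r n
    rw [e]; simpa using h.mul_left ((r : ℝ) ^ 2)
  convert h2 using 1
  · rfl
  simp [Finset.sum_range_succ]

lemma pois_hasSum_chi (r : ℝ≥0) (c : ℝ) :
    HasSum (fun n : ℕ => poissonPMFReal r n * (((n : ℝ) - c) ^ 2 - n)) (((r : ℝ) - c) ^ 2) := by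
  have h0 := ((show HasSum (fun n => poissonPMFReal r n) 1 from poissonPMFRealSum r)).mul_right (c ^ 2)
  have h1 := (pois_sum1 r).mul_right (-(2 * c))
  have h2 := pois_sum2 r
  have := (h2.add h1).add h0
  convert this using 2 with n
  · ring
  · push_cast; ring

lemma pois_summable_abs (r : ℝ≥0) (c : ℝ) :
    Summable (fun n : ℕ => poissonPMFReal r n * |(((n : ℝ) - c) ^ 2 - n)|) := by
  have hdom : Summable (fun n : ℕ => poissonPMFReal r n *
      ((n : ℝ) * ((n : ℝ) - 1) + (2 * |c|) * n + c ^ 2)) := by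
    have := ((pois_sum2 r).add ((pois_sum1 r).mul_right (2 * |c|))).add
      (((show HasSum (fun n => poissonPMFReal r n) 1 from poissonPMFRealSum r)).mul_right (c ^ 2))
    refine this.summable.congr fun n => ?_
    ring
  refine Summable.of_nonneg_of_le (fun n => mul_nonneg poissonPMFReal_nonneg (abs_nonneg _)) (fun n => ?_) hdom
  have hnn : 0 ≤ poissonPMFReal r n := poissonPMFReal_nonneg
  refine mul_le_mul_of_nonneg_left ?_ hnn
  have h1 : (((n : ℝ) - c) ^ 2 - n) = (n : ℝ) * ((n : ℝ) - 1) + (-(2 * c)) * n + c ^ 2 := by ring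
  rw [h1]
  calc |(n : ℝ) * ((n : ℝ) - 1) + (-(2 * c)) * n + c ^ 2|
      ≤ |(n : ℝ) * ((n : ℝ) - 1)| + |(-(2 * c)) * n| + |c ^ 2| := abs_add_three _ _ _
    _ ≤ (n : ℝ) * ((n : ℝ) - 1) + (2 * |c|) * n + c ^ 2 := by
        have hn : (0 : ℝ) ≤ (n : ℝ) * ((n : ℝ) - 1) := by
          rcases Nat.eq_zero_or_pos n with h | h
          · simp [h]
          · have : (1 : ℝ) ≤ (n : ℝ) := by exact_mod_cast h
            nlinarith
        rw [abs_of_nonneg hn, abs_mul, abs_neg, abs_mul, abs_sq, Nat.abs_cast, abs_two]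

lemma pois_integrable (r : ℝ≥0) (c : ℝ) :
    MeasureTheory.Integrable (fun n : ℕ => ((n : ℝ) - c) ^ 2 - n) (poissonMeasure r) := by
  constructor
  · exact (measurable_from_top).aestronglyMeasurable
  · rw [MeasureTheory.hasFiniteIntegral_def, MeasureTheory.lintegral_countable']
    have hμ : ∀ a : ℕ, poissonMeasure r {a} = ENNReal.ofReal (poissonPMFReal r a) := by
      intro a
      rw [poissonMeasure_singleton]
      rfl
    calc ∑' a : ℕ, (‖(((a : ℝ) - c) ^ 2 - a)‖₊ : ENNReal) * poissonMeasure r {a}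
        = ∑' a : ℕ, ENNReal.ofReal (poissonPMFReal r a * |(((a : ℝ) - c) ^ 2 - a)|) := by
          refine tsum_congr fun a => ?_
          rw [hμ a, mul_comm (poissonPMFReal r a), ENNReal.ofReal_mul (abs_nonneg _)]
          congr 1
          rw [← Real.norm_eq_abs, ofReal_norm, enorm_eq_nnnorm]
      _ < ⊤ := by
          rw [← ENNReal.ofReal_tsum_of_nonneg (fun n => mul_nonneg poissonPMFReal_nonneg (abs_nonneg _)) (pois_summable_abs r c)]
          exact ENNReal.ofReal_lt_top

lemma pois_integral (r : ℝ≥0) (c : ℝ) :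
    ∫ n : ℕ, (((n : ℝ) - c) ^ 2 - n) ∂(poissonMeasure r) = ((r : ℝ) - c) ^ 2 := by
  rw [integral_poissonMeasure' (pois_integrable r c)]
  have he : ∀ n : ℕ, (Real.exp (-(r : ℝ)) * (r : ℝ) ^ n / (n.factorial : ℝ)) • (((n : ℝ) - c) ^ 2 - n)
      = poissonPMFReal r n * (((n : ℝ) - c) ^ 2 - n) := by
    intro n
    rw [smul_eq_mul]
    rfl
  rw [tsum_congr he, (pois_hasSum_chi r c).tsum_eq]

/-- **Expectation of the chi-squared statistic.**
If `X i ~ Poi(m qᵢ)` then `E[Zᵢ] = m² Δᵢ²` where `Zᵢ = (Xᵢ - m/n)² - Xᵢ` and `Δᵢ = 1/n - qᵢ`;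
consequently, if the `X i` are independent and `Z = ∑ i Zᵢ`, then
`E[Z] = m² ‖q - U_n‖₂²`. -/
theorem poisson_chi_squared_expectation (n : ℕ) (hn : 1 ≤ n) (q : Fin n → ℝ) (hq : IsDist q)
    (m : ℝ) (hm : 0 < m)
    (Ω : Type) [MeasurableSpace Ω] (μ : Measure Ω) [IsProbabilityMeasure μ]
    (X : Fin n → Ω → ℕ) (hX : ∀ i, Measurable (X i))
    (hdist : ∀ i, μ.map (X i) = poissonMeasure (m * q i).toNNReal) :
    (∀ i, ∫ ω, (((X i ω : ℝ) - m / n) ^ 2 - (X i ω : ℝ)) ∂μ = m ^ 2 * (1 / n - q i) ^ 2) ∧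
    (iIndepFun X μ →
      ∫ ω, ∑ i, (((X i ω : ℝ) - m / n) ^ 2 - (X i ω : ℝ)) ∂μ =
        m ^ 2 * L2Dist q (unif n) ^ 2) := by
  have hr : ∀ i, ((m * q i).toNNReal : ℝ) = m * q i := fun i =>
    Real.coe_toNNReal _ (mul_nonneg hm.le (hq.1 i))
  have key : ∀ i, ∫ ω, (((X i ω : ℝ) - m / n) ^ 2 - (X i ω : ℝ)) ∂μ
      = m ^ 2 * (1 / n - q i) ^ 2 := by
    intro i
    have hmeas : Measurable (fun k : ℕ => ((k : ℝ) - m / n) ^ 2 - (k : ℝ)) :=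
      measurable_from_top
    have h1 : ∫ k : ℕ, (((k : ℝ) - m / n) ^ 2 - (k : ℝ)) ∂(μ.map (X i))
        = ∫ ω, (((X i ω : ℝ) - m / n) ^ 2 - (X i ω : ℝ)) ∂μ :=
      integral_map (hX i).aemeasurable hmeas.aestronglyMeasurable
    rw [← h1, hdist i, pois_integral _ (m / n), hr i]
    have hn' : (n : ℝ) ≠ 0 := by positivity
    field_simp
    ring
  refine ⟨key, fun _ => ?_⟩
  have hint : ∀ i : Fin n, Integrable (fun ω => ((X i ω : ℝ) - m / n) ^ 2 - (X i ω : ℝ)) μ := by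
    intro i
    have hmeas : Measurable (fun k : ℕ => ((k : ℝ) - m / n) ^ 2 - (k : ℝ)) :=
      measurable_from_top
    have h2 := pois_integrable (m * q i).toNNReal (m / n)
    rw [← hdist i] at h2
    exact (integrable_map_measure hmeas.aestronglyMeasurable (hX i).aemeasurable).mp h2
  rw [integral_finset_sum _ (fun i _ => hint i)]
  simp only [key]
  rw [← Finset.mul_sum]
  congr 1
  have hsum : ∑ i, (1 / (n : ℝ) - q i) ^ 2 = ∑ i, (q i - unif n i) ^ 2 := by
    refine Finset.sum_congr rfl fun i _ => ?_
    simp only [unif]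
    ring
  rw [hsum, L2Dist, Real.sq_sqrt (Finset.sum_nonneg fun i _ => sq_nonneg _)]
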